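/- Let γ ≥ 1, ε ∈ (0,1], and let (r,v) be a smooth solution on [0,∞)×[0,1] of the deterministic acoustic system r_t + (1/ε)v_x = 0, v_t + (γ/ε)r_x = v_{xx}, with v(t,0) = v(t,1) = 0 and ∫₀¹ r(t,x)dx = 0. Then the energy G(r,v)(t) = ∫₀¹((1/2)(γr² + v²) + (ε/2)v r_x + (ε²/4)r_x²)dx satisfies G(r,v)(t) ≤ G(r,v)(0)·e^{−t/2} for all t ≥ 0. -/

import Mathlib

open MeasureTheory

open MeasureTheory intervalIntegral Set Metric

/-- FTC: derivative of `u ↦ ∫ s in 0..u, g s` for continuous `g`. -/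
lemma ftc_right (g : ℝ → ℝ) (hg : Continuous g) (t : ℝ) :
    HasDerivAt (fun u => ∫ s in (0:ℝ)..u, g s) (g t) t :=
  intervalIntegral.integral_hasDerivAt_right (hg.intervalIntegrable _ _)
    (hg.stronglyMeasurableAtFilter _ _) hg.continuousAt

/-- Differentiation under the interval integral sign, continuous case. -/
lemma param_deriv (F F' : ℝ → ℝ → ℝ) (a b x₀ : ℝ)
    (hFc : Continuous fun p : ℝ × ℝ => F p.1 p.2)
    (hF'c : Continuous fun p : ℝ × ℝ => F' p.1 p.2)
    (hdiff : ∀ x t, HasDerivAt (fun x => F x t) (F' x t) x) :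
    HasDerivAt (fun x => ∫ t in a..b, F x t) (∫ t in a..b, F' x₀ t) x₀ := by
  obtain ⟨C, hC⟩ := ((isCompact_closedBall x₀ 1).prod isCompact_uIcc).exists_bound_of_continuousOn
    (f := fun p : ℝ × ℝ => F' p.1 p.2) hF'c.continuousOn
  have key := intervalIntegral.hasDerivAt_integral_of_dominated_loc_of_deriv_le
    (F := F) (F' := F') (x₀ := x₀) (a := a) (b := b) (bound := fun _ => C) (μ := volume)
    (ball_mem_nhds x₀ one_pos)
    (Filter.Eventually.of_forall fun x =>
      ((hFc.comp (continuous_const.prodMk continuous_id)).aestronglyMeasurable))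
    ((hFc.comp (continuous_const.prodMk continuous_id)).intervalIntegrable a b)
    ((hF'c.comp (continuous_const.prodMk continuous_id)).aestronglyMeasurable)
    (MeasureTheory.ae_of_all _ fun t ht x hx =>
      hC (x, t) ⟨ball_subset_closedBall hx, Set.uIoc_subset_uIcc ht⟩)
    intervalIntegrable_const
    (MeasureTheory.ae_of_all _ fun t ht x hx => hdiff x t)
  exact key.2

/-- Cauchy–Schwarz-type bound on `[0,1]`. -/
lemma sq_int_abs_le (g : ℝ → ℝ) (hg : Continuous g) :
    (∫ y in (0:ℝ)..1, |g y|)^2 ≤ ∫ y in (0:ℝ)..1, (g y)^2 := by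
  set I := ∫ y in (0:ℝ)..1, |g y| with hI
  set E := ∫ y in (0:ℝ)..1, (g y)^2 with hE
  have hE0 : 0 ≤ E := intervalIntegral.integral_nonneg (by norm_num) (fun y _ => sq_nonneg _)
  have hI0 : 0 ≤ I := intervalIntegral.integral_nonneg (by norm_num) (fun y _ => abs_nonneg _)
  have key : ∀ δ > (0:ℝ), I^2 ≤ E + δ := by
    intro δ hδ
    set a := Real.sqrt (E + δ) with ha
    have ha2 : a^2 = E + δ := Real.sq_sqrt (by linarith)
    have ha0 : 0 < a := Real.sqrt_pos.mpr (by linarith)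
    have hpt : ∀ y, |g y| ≤ a/2 + (g y)^2/(2*a) := by
      intro y
      rw [div_add_div _ _ two_ne_zero (by positivity), le_div_iff₀ (by positivity)]
      nlinarith [sq_nonneg (a - |g y|), sq_abs (g y)]
    have hmono : I ≤ ∫ y in (0:ℝ)..1, (a/2 + (g y)^2/(2*a)) := by
      apply intervalIntegral.integral_mono_on (by norm_num)
        (hg.abs.intervalIntegrable _ _)
        ((continuous_const.add ((hg.pow 2).div_const _)).intervalIntegrable _ _)
        (fun y _ => hpt y)
    have hsplit : (∫ y in (0:ℝ)..1, (a/2 + (g y)^2/(2*a))) = a/2 + E/(2*a) := by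
      rw [intervalIntegral.integral_add (f := fun _ => a/2) (g := fun y => (g y)^2/(2*a)) (intervalIntegrable_const)
        (((hg.pow 2).div_const _).intervalIntegrable _ _)]
      simp [intervalIntegral.integral_div, ← hE]
    have hIa : I ≤ a := by
      rw [hsplit] at hmono
      have : E/(2*a) ≤ a/2 := by
        rw [div_le_div_iff₀ (by positivity) (by norm_num)]
        nlinarith
      linarith
    nlinarith
  linarith [le_of_forall_pos_le_add key]

/-- Pointwise Poincaré bound on `[0,1]` given a zero of `f`. -/
lemma poincare_pt (f f' : ℝ → ℝ) (hf : ∀ x, HasDerivAt f (f' x) x) (hc' : Continuous f')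
    (c : ℝ) (hc : c ∈ Set.Icc (0:ℝ) 1) (hfc : f c = 0)
    (x : ℝ) (hx : x ∈ Set.Icc (0:ℝ) 1) :
    (f x)^2 ≤ ∫ y in (0:ℝ)..1, (f' y)^2 := by
  have hrep : f x = ∫ y in c..x, f' y := by
    rw [intervalIntegral.integral_eq_sub_of_hasDerivAt (fun y _ => hf y)
      (hc'.intervalIntegrable _ _), hfc, sub_zero]
  have hsub : Set.uIoc c x ⊆ Set.uIoc (0:ℝ) 1 := by
    rw [Set.uIoc_of_le (zero_le_one)]
    exact fun y hy => ⟨lt_of_le_of_lt (le_min hc.1 hx.1) hy.1,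
      le_trans hy.2 (max_le hc.2 hx.2)⟩
  have habs : |f x| ≤ ∫ y in (0:ℝ)..1, |f' y| := by
    rw [hrep, ← Real.norm_eq_abs]
    calc ‖∫ y in c..x, f' y‖ ≤ |∫ y in c..x, ‖f' y‖| :=
          intervalIntegral.norm_integral_le_abs_integral_norm
      _ ≤ |∫ y in (0:ℝ)..1, ‖f' y‖| := by
          apply intervalIntegral.abs_integral_mono_interval hsub
            (MeasureTheory.ae_of_all _ fun y => norm_nonneg _)
            (hc'.norm.intervalIntegrable _ _)
      _ = ∫ y in (0:ℝ)..1, |f' y| := by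
          rw [abs_of_nonneg (intervalIntegral.integral_nonneg (by norm_num)
            (fun y _ => norm_nonneg _))]
          simp [Real.norm_eq_abs]
  calc (f x)^2 = |f x|^2 := (sq_abs _).symm
    _ ≤ (∫ y in (0:ℝ)..1, |f' y|)^2 := by
        apply pow_le_pow_left₀ (abs_nonneg _) habs
    _ ≤ ∫ y in (0:ℝ)..1, (f' y)^2 := sq_int_abs_le f' hc'

/-- A continuous function on `[0,1]` with zero mean has a zero. -/
lemma exists_zero_of_mean_zero (f : ℝ → ℝ) (hf : Continuous f)
    (h0 : (∫ x in (0:ℝ)..1, f x) = 0) :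
    ∃ c ∈ Set.Icc (0:ℝ) 1, f c = 0 := by
  by_contra h
  push_neg at h
  have h00 : f 0 ≠ 0 := h 0 ⟨le_refl _, zero_le_one⟩
  rcases h00.lt_or_gt with hneg | hpos
  · -- f 0 < 0 : show all negative, then integral < 0
    have hall : ∀ x ∈ Set.Icc (0:ℝ) 1, f x < 0 := by
      intro x hx
      by_contra hx'
      push_neg at hx'
      have : (0:ℝ) ∈ Set.Icc (f 0) (f x) := ⟨le_of_lt hneg, hx'⟩
      obtain ⟨c, hc, hfc⟩ := intermediate_value_Icc hx.1 (hf.continuousOn) this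
      exact h c ⟨hc.1, le_trans hc.2 hx.2⟩ hfc
    have : (0:ℝ) < ∫ x in (0:ℝ)..1, -f x :=
      intervalIntegral.intervalIntegral_pos_of_pos_on (hf.neg.intervalIntegrable _ _)
        (fun x hx => by
          have := hall x ⟨le_of_lt hx.1, le_of_lt hx.2⟩; linarith) one_pos
    rw [intervalIntegral.integral_neg, h0] at this
    simp at this
  · have hall : ∀ x ∈ Set.Icc (0:ℝ) 1, 0 < f x := by
      intro x hx
      by_contra hx'
      push_neg at hx'
      have : (0:ℝ) ∈ Set.Icc (f x) (f 0) := ⟨hx', le_of_lt hpos⟩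
      obtain ⟨c, hc, hfc⟩ := intermediate_value_Icc' hx.1 (hf.continuousOn) this
      exact h c ⟨hc.1, le_trans hc.2 hx.2⟩ hfc
    have : (0:ℝ) < ∫ x in (0:ℝ)..1, f x :=
      intervalIntegral.intervalIntegral_pos_of_pos_on (hf.intervalIntegrable _ _)
        (fun x hx => hall x ⟨le_of_lt hx.1, le_of_lt hx.2⟩) one_pos
    rw [h0] at this; exact lt_irrefl _ this


/-- Exponential decay of the energy G along smooth solutions of the
    deterministic acoustic system r_t + (1/ε)v_x = 0, v_t + (γ/ε)r_x = v_xx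
    with Dirichlet conditions on v and mean-zero r: G(t) ≤ G(0) e^{−t/2}. -/
theorem stmt_9 (γ ε : ℝ) (hγ : 1 ≤ γ) (hε : ε ∈ Set.Ioc (0:ℝ) 1)
    (r v rt rx vt vx vxx : ℝ → ℝ → ℝ)
    (hrt : ∀ t x, HasDerivAt (fun s => r s x) (rt t x) t)
    (hrx : ∀ t x, HasDerivAt (fun y => r t y) (rx t x) x)
    (hvt : ∀ t x, HasDerivAt (fun s => v s x) (vt t x) t)
    (hvx : ∀ t x, HasDerivAt (fun y => v t y) (vx t x) x)
    (hvxx : ∀ t x, HasDerivAt (fun y => vx t y) (vxx t x) x)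
    (hcont : Continuous fun p : ℝ × ℝ =>
      (r p.1 p.2, rx p.1 p.2, rt p.1 p.2, v p.1 p.2, vx p.1 p.2, vt p.1 p.2, vxx p.1 p.2))
    (heq1 : ∀ t x, rt t x + (1/ε) * vx t x = 0)
    (heq2 : ∀ t x, vt t x + (γ/ε) * rx t x = vxx t x)
    (hbc0 : ∀ t, v t 0 = 0) (hbc1 : ∀ t, v t 1 = 0)
    (hmean : ∀ t, (∫ x in (0:ℝ)..1, r t x) = 0)
    (G : ℝ → ℝ)
    (hG : ∀ t, G t = ∫ x in (0:ℝ)..1,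
      (1/2 * (γ * (r t x)^2 + (v t x)^2) + ε/2 * v t x * rx t x + ε^2/4 * (rx t x)^2)) :
    ∀ t ≥ (0:ℝ), G t ≤ G 0 * Real.exp (-t/2) := by
  have hε0 : (0:ℝ) < ε := hε.1
  have hεne : ε ≠ 0 := ne_of_gt hε0
  -- continuity of components
  have hc_r : Continuous fun p : ℝ × ℝ => r p.1 p.2 := hcont.fst
  have hc_rx : Continuous fun p : ℝ × ℝ => rx p.1 p.2 := hcont.snd.fst
  have hc_rt : Continuous fun p : ℝ × ℝ => rt p.1 p.2 := hcont.snd.snd.fst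
  have hc_v : Continuous fun p : ℝ × ℝ => v p.1 p.2 := hcont.snd.snd.snd.fst
  have hc_vx : Continuous fun p : ℝ × ℝ => vx p.1 p.2 := hcont.snd.snd.snd.snd.fst
  have hc_vt : Continuous fun p : ℝ × ℝ => vt p.1 p.2 := hcont.snd.snd.snd.snd.snd.fst
  have hc_vxx : Continuous fun p : ℝ × ℝ => vxx p.1 p.2 := hcont.snd.snd.snd.snd.snd.snd
  -- curried continuity in x for fixed t
  have cx : ∀ (g : ℝ → ℝ → ℝ), Continuous (fun p : ℝ × ℝ => g p.1 p.2) →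
      ∀ t, Continuous fun y => g t y := fun g hg t =>
    hg.comp (continuous_const.prodMk continuous_id)
  -- curried continuity in t for fixed x
  have ct : ∀ (g : ℝ → ℝ → ℝ), Continuous (fun p : ℝ × ℝ => g p.1 p.2) →
      ∀ x, Continuous fun s => g s x := fun g hg x =>
    hg.comp (continuous_id.prodMk continuous_const)
  -- Step A: representation r t y = r 0 y - (1/ε) ∫₀ᵗ vx
  have hrep : ∀ t y, r t y = r 0 y - (1/ε) * ∫ s in (0:ℝ)..t, vx s y := by
    intro t y
    set φ : ℝ → ℝ := fun t => r t y + (1/ε) * ∫ s in (0:ℝ)..t, vx s y with hφ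
    have hφ' : ∀ u, HasDerivAt φ 0 u := by
      intro u
      have h1 := (hrt u y).add (((ftc_right _ (ct vx hc_vx y) u)).const_mul (1/ε))
      have : rt u y + 1/ε * vx u y = 0 := by have := heq1 u y; linarith
      rw [this] at h1; exact h1
    have hconst : φ t = φ 0 :=
      is_const_of_deriv_eq_zero (fun u => (hφ' u).differentiableAt)
        (fun u => (hφ' u).deriv) t 0
    have hφ0 : φ 0 = r 0 y := by simp [hφ]
    rw [hφ0] at hconst
    simp only [hφ] at hconst
    linarith
  -- Step A': rx t x = rx 0 x - (1/ε) ∫₀ᵗ vxx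
  have hrxrep : ∀ t x, rx t x = rx 0 x - (1/ε) * ∫ s in (0:ℝ)..t, vxx s x := by
    intro t x
    have hIx : HasDerivAt (fun y => ∫ s in (0:ℝ)..t, vx s y)
        (∫ s in (0:ℝ)..t, vxx s x) x := by
      apply param_deriv (fun y s => vx s y) (fun y s => vxx s y) 0 t x
        (hc_vx.comp (continuous_snd.prodMk continuous_fst))
        (hc_vxx.comp (continuous_snd.prodMk continuous_fst))
        (fun y s => hvxx s y)
    have h2 : HasDerivAt (fun y => r t y)
        (rx 0 x - (1/ε) * ∫ s in (0:ℝ)..t, vxx s x) x := by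
      have : (fun y => r t y) = fun y => r 0 y - (1/ε) * ∫ s in (0:ℝ)..t, vx s y :=
        funext fun y => hrep t y
      rw [this]
      exact (hrx 0 x).sub (hIx.const_mul (1/ε))
    exact (hrx t x).unique h2
  -- Step A'': t-derivative of rx
  have hrtx : ∀ t x, HasDerivAt (fun s => rx s x) (-(1/ε) * vxx t x) t := by
    intro t x
    have : (fun s => rx s x) = fun s => rx 0 x - (1/ε) * ∫ u in (0:ℝ)..s, vxx u x :=
      funext fun s => hrxrep s x
    rw [this]
    have := (hasDerivAt_const t (rx 0 x)).sub
      ((ftc_right _ (ct vxx hc_vxx x) t).const_mul (1/ε))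
    exact this.congr_deriv (by ring)
  -- Energies
  set Rx : ℝ → ℝ := fun t => ∫ x in (0:ℝ)..1, (rx t x)^2 with hRx
  set Vx : ℝ → ℝ := fun t => ∫ x in (0:ℝ)..1, (vx t x)^2 with hVx
  have hRx0 : ∀ t, 0 ≤ Rx t := fun t =>
    intervalIntegral.integral_nonneg (by norm_num) (fun y _ => sq_nonneg _)
  have hVx0 : ∀ t, 0 ≤ Vx t := fun t =>
    intervalIntegral.integral_nonneg (by norm_num) (fun y _ => sq_nonneg _)
  -- Step B: derivative of G
  set Ft : ℝ → ℝ → ℝ := fun t x =>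
    1/2 * (γ * (2 * r t x ^ 1 * rt t x) + 2 * v t x ^ 1 * vt t x)
      + ε/2 * (vt t x * rx t x + v t x * (-(1/ε) * vxx t x))
      + ε^2/4 * (2 * rx t x ^ 1 * (-(1/ε) * vxx t x)) with hFt
  have hFtc : Continuous fun p : ℝ × ℝ => Ft p.1 p.2 := by
    simp only [hFt]
    fun_prop
  have hGd : ∀ t, HasDerivAt G (∫ x in (0:ℝ)..1, Ft t x) t := by
    intro t
    have hGeq : G = fun t => ∫ x in (0:ℝ)..1,
        (1/2 * (γ * (r t x)^2 + (v t x)^2) + ε/2 * v t x * rx t x + ε^2/4 * (rx t x)^2) :=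
      funext hG
    rw [hGeq]
    apply param_deriv _ Ft 0 1 t
    · fun_prop
    · exact hFtc
    · intro s x
      have h1 : HasDerivAt (fun s => 1/2 * (γ * (r s x)^2 + (v s x)^2))
          (1/2 * (γ * (2 * r s x ^ 1 * rt s x) + 2 * v s x ^ 1 * vt s x)) s :=
        ((((hrt s x).pow 2).const_mul γ).add ((hvt s x).pow 2)).const_mul (1/2)
      have h2 : HasDerivAt (fun s => ε/2 * v s x * rx s x)
          (ε/2 * (vt s x * rx s x + v s x * (-(1/ε) * vxx s x))) s := by
        have := ((hvt s x).mul (hrtx s x)).const_mul (ε/2)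
        have e : (fun s => ε/2 * v s x * rx s x) = fun y => ε/2 * ((fun s => v s x) * fun s => rx s x) y := by
          funext u; simp only [Pi.mul_apply]; ring
        rw [e]; exact this
      have h3 : HasDerivAt (fun s => ε^2/4 * (rx s x)^2)
          (ε^2/4 * (2 * rx s x ^ 1 * (-(1/ε) * vxx s x))) s :=
        ((hrtx s x).pow 2).const_mul (ε^2/4)
      exact (h1.add h2).add h3
  -- Step C: value of the derivative
  have hFtval : ∀ t, (∫ x in (0:ℝ)..1, Ft t x) = -(γ/2) * Rx t - 1/2 * Vx t := by
    intro t
    have hpt : ∀ x, Ft t x =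
        -(γ/ε) * (rx t x * v t x + r t x * vx t x)
          + 1/2 * (vx t x * vx t x + v t x * vxx t x)
          - (1/2 * (vx t x)^2 + γ/2 * (rx t x)^2) := by
      intro x
      have e1 : rt t x = -(1/ε) * vx t x := by have := heq1 t x; linarith
      have e2 : vt t x = vxx t x - (γ/ε) * rx t x := by have := heq2 t x; linarith
      simp only [hFt, e1, e2]
      field_simp
      ring
    rw [intervalIntegral.integral_congr (fun x _ => hpt x)]
    have i1 : (∫ x in (0:ℝ)..1, (rx t x * v t x + r t x * vx t x)) = 0 := by
      rw [intervalIntegral.integral_eq_sub_of_hasDerivAt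
        (f := fun y => r t y * v t y)
        (fun y _ => (hrx t y).mul (hvx t y))
        (by apply Continuous.intervalIntegrable; fun_prop)]
      rw [hbc0 t, hbc1 t]; ring
    have i2 : (∫ x in (0:ℝ)..1, (vx t x * vx t x + v t x * vxx t x)) = 0 := by
      rw [intervalIntegral.integral_eq_sub_of_hasDerivAt
        (f := fun y => v t y * vx t y)
        (fun y _ => (hvx t y).mul (hvxx t y))
        (by apply Continuous.intervalIntegrable; fun_prop)]
      rw [hbc0 t, hbc1 t]; ring
    rw [intervalIntegral.integral_sub (by apply Continuous.intervalIntegrable; fun_prop) (by apply Continuous.intervalIntegrable; fun_prop),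
      intervalIntegral.integral_add (by apply Continuous.intervalIntegrable; fun_prop) (by apply Continuous.intervalIntegrable; fun_prop),
      intervalIntegral.integral_const_mul, intervalIntegral.integral_const_mul, i1, i2,
      intervalIntegral.integral_add (by apply Continuous.intervalIntegrable; fun_prop) (by apply Continuous.intervalIntegrable; fun_prop),
      intervalIntegral.integral_const_mul, intervalIntegral.integral_const_mul]
    have hfR : (∫ x in (0:ℝ)..1, (rx t x)^2) = Rx t := rfl
    have hfV : (∫ x in (0:ℝ)..1, (vx t x)^2) = Vx t := rfl
    rw [hfR, hfV]; ring
  -- Step D: Poincaré bounds at each time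
  have hIv : ∀ t, (∫ x in (0:ℝ)..1, (v t x)^2) ≤ Vx t := by
    intro t
    have hpt : ∀ x ∈ Set.Icc (0:ℝ) 1, (v t x)^2 ≤ Vx t := fun x hx =>
      poincare_pt (v t) (vx t) (hvx t) (cx vx hc_vx t) 0 ⟨le_refl _, zero_le_one⟩
        (hbc0 t) x hx
    calc (∫ x in (0:ℝ)..1, (v t x)^2) ≤ ∫ _x in (0:ℝ)..1, Vx t := by
          apply intervalIntegral.integral_mono_on (by norm_num) (by apply Continuous.intervalIntegrable; fun_prop)
            intervalIntegrable_const hpt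
      _ = Vx t := by simp
  have hIr : ∀ t, (∫ x in (0:ℝ)..1, (r t x)^2) ≤ Rx t := by
    intro t
    obtain ⟨c, hc, hfc⟩ := exists_zero_of_mean_zero (r t) (cx r hc_r t) (hmean t)
    have hpt : ∀ x ∈ Set.Icc (0:ℝ) 1, (r t x)^2 ≤ Rx t := fun x hx =>
      poincare_pt (r t) (rx t) (hrx t) (cx rx hc_rx t) c hc hfc x hx
    calc (∫ x in (0:ℝ)..1, (r t x)^2) ≤ ∫ _x in (0:ℝ)..1, Rx t := by
          apply intervalIntegral.integral_mono_on (by norm_num) (by apply Continuous.intervalIntegrable; fun_prop)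
            intervalIntegrable_const hpt
      _ = Rx t := by simp
  -- Step E: G t ≤ γ Rx t + Vx t
  have hGle : ∀ t, G t ≤ γ * Rx t + Vx t := by
    intro t
    have hsplit : G t = (∫ x in (0:ℝ)..1, 1/2 * (γ * (r t x)^2 + (v t x)^2))
        + (∫ x in (0:ℝ)..1, ε/2 * v t x * rx t x)
        + ∫ x in (0:ℝ)..1, ε^2/4 * (rx t x)^2 := by
      rw [hG t, intervalIntegral.integral_add (by apply Continuous.intervalIntegrable; fun_prop) (by apply Continuous.intervalIntegrable; fun_prop),
        intervalIntegral.integral_add (by apply Continuous.intervalIntegrable; fun_prop) (by apply Continuous.intervalIntegrable; fun_prop)]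
    have hA1 : (∫ x in (0:ℝ)..1, 1/2 * (γ * (r t x)^2 + (v t x)^2))
        ≤ γ/2 * Rx t + 1/2 * Vx t := by
      have : (∫ x in (0:ℝ)..1, 1/2 * (γ * (r t x)^2 + (v t x)^2))
          = γ/2 * (∫ x in (0:ℝ)..1, (r t x)^2) + 1/2 * ∫ x in (0:ℝ)..1, (v t x)^2 := by
        rw [← intervalIntegral.integral_const_mul, ← intervalIntegral.integral_const_mul,
          ← intervalIntegral.integral_add (by apply Continuous.intervalIntegrable; fun_prop) (by apply Continuous.intervalIntegrable; fun_prop)]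
        apply intervalIntegral.integral_congr
        intro x _; ring
      rw [this]
      have h1 := hIr t; have h2 := hIv t
      nlinarith [hRx0 t, hVx0 t]
    have hA2 : (∫ x in (0:ℝ)..1, ε/2 * v t x * rx t x) ≤ 1/4 * Vx t + 1/4 * Rx t := by
      have step1 : (∫ x in (0:ℝ)..1, ε/2 * v t x * rx t x)
          ≤ ∫ x in (0:ℝ)..1, (ε/4 * (v t x)^2 + ε/4 * (rx t x)^2) := by
        apply intervalIntegral.integral_mono_on (by norm_num) (by apply Continuous.intervalIntegrable; fun_prop) (by apply Continuous.intervalIntegrable; fun_prop)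
        intro x _
        nlinarith [sq_nonneg (v t x - rx t x), hε0]
      have step2 : (∫ x in (0:ℝ)..1, (ε/4 * (v t x)^2 + ε/4 * (rx t x)^2))
          = ε/4 * (∫ x in (0:ℝ)..1, (v t x)^2) + ε/4 * Rx t := by
        rw [intervalIntegral.integral_add (by apply Continuous.intervalIntegrable; fun_prop) (by apply Continuous.intervalIntegrable; fun_prop),
          intervalIntegral.integral_const_mul, intervalIntegral.integral_const_mul]
      have hv2nn : (0:ℝ) ≤ ∫ x in (0:ℝ)..1, (v t x)^2 :=
        intervalIntegral.integral_nonneg (by norm_num) (fun y _ => sq_nonneg _)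
      have h2 := hIv t
      have hε1 := hε.2
      nlinarith [hRx0 t, hVx0 t]
    have hA3 : (∫ x in (0:ℝ)..1, ε^2/4 * (rx t x)^2) ≤ 1/4 * Rx t := by
      rw [intervalIntegral.integral_const_mul]
      have hfR : (∫ x in (0:ℝ)..1, (rx t x)^2) = Rx t := rfl
      rw [hfR]
      have hε1 := hε.2
      apply mul_le_mul_of_nonneg_right _ (hRx0 t)
      nlinarith
    have := hRx0 t; have := hVx0 t
    nlinarith
  -- Step F+G: Gronwall via monotonicity of H t = G t * exp (t/2)
  set H : ℝ → ℝ := fun t => G t * Real.exp (t/2) with hH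
  have hHd : ∀ t, HasDerivAt H
      ((-(γ/2) * Rx t - 1/2 * Vx t) * Real.exp (t/2) + G t * (Real.exp (t/2) * (1/2))) t := by
    intro t
    have hexp : HasDerivAt (fun t : ℝ => Real.exp (t/2)) (Real.exp (t/2) * (1/2)) t :=
      by have := (Real.hasDerivAt_exp (t/2)).comp t ((hasDerivAt_id' t).div_const 2); exact this
    have := (hGd t).mul hexp
    rw [hFtval t] at this
    exact this
  have hHd0 : ∀ t, deriv H t ≤ 0 := by
    intro t
    rw [(hHd t).deriv]
    have h1 : -(γ/2) * Rx t - 1/2 * Vx t ≤ -(1/2) * G t := by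
      have := hGle t; linarith
    have hexp := Real.exp_pos (t/2)
    nlinarith
  have hanti : Antitone H :=
    antitone_of_deriv_nonpos (fun t => (hHd t).differentiableAt) hHd0
  intro t ht
  have hkey : G t * Real.exp (t/2) ≤ G 0 := by
    have := hanti ht
    simpa [hH] using this
  have hfin : G t * Real.exp (t/2) * Real.exp (-t/2) ≤ G 0 * Real.exp (-t/2) :=
    mul_le_mul_of_nonneg_right hkey (Real.exp_nonneg _)
  calc G t = G t * Real.exp (t/2) * Real.exp (-t/2) := by
        rw [mul_assoc, ← Real.exp_add, show t/2 + -t/2 = 0 by ring, Real.exp_zero,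
          mul_one]
    _ ≤ G 0 * Real.exp (-t/2) := hfin
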